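/- Let G = ℤ² ⋊_f ℤ where f is the automorphism of ℤ² given by the matrix [[2,5],[1,3]]. Then G is poly-free but G is not normally poly-free. -/

import Mathlib

universe u v

/-- Poly-free with a subnormal chain of length `n` (length at most `n`,
since successive subgroups may coincide): there is a chain
`1 = G₀ ⊴ G₁ ⊴ ⋯ ⊴ Gₙ = G` with each quotient `Gᵢ₊₁/Gᵢ` a free group. -/
def IsPolyFreeOfLen : ℕ → (G : Type u) → [Group G] → Prop
  | 0, G, _ => Subsingleton G
  | n + 1, G, _ => ∃ (N : Subgroup G) (_ : N.Normal),
      IsPolyFreeOfLen n N ∧ IsFreeGroup (G ⧸ N)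

/-- A group is poly-free if it admits a subnormal chain with free quotients. -/
def IsPolyFree (G : Type u) [Group G] : Prop := ∃ n, IsPolyFreeOfLen n G

/-- Normally poly-free with a chain of length `n`: a chain
`1 = G₀ ≤ G₁ ≤ ⋯ ≤ Gₙ = G` with every `Gᵢ` normal in `G` and every quotient
`Gᵢ₊₁/Gᵢ` a free group (expressed via a surjection onto a free group whose
kernel is the previous term). -/
def IsNormallyPolyFreeOfLen (n : ℕ) (G : Type u) [Group G] : Prop :=
  ∃ c : Fin (n + 1) → Subgroup G,
    c 0 = ⊥ ∧ c (Fin.last n) = ⊤ ∧ (∀ i : Fin n, c i.castSucc ≤ c i.succ) ∧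
    (∀ i, (c i).Normal) ∧
    ∀ i : Fin n, ∃ (F : Type u) (_ : Group F) (f : ↥(c i.succ) →* F),
      IsFreeGroup F ∧ Function.Surjective f ∧
      f.ker = (c i.castSucc).subgroupOf (c i.succ)

/-- A group is normally poly-free if it admits such a chain of some length. -/
def IsNormallyPolyFree (G : Type u) [Group G] : Prop :=
  ∃ n, IsNormallyPolyFreeOfLen n G


/-- The automorphism of `ℤ²` given by the matrix `[[2,5],[1,3]]`. -/
def matAut : (ℤ × ℤ) ≃+ (ℤ × ℤ) where
  toFun p := (2 * p.1 + 5 * p.2, p.1 + 3 * p.2)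
  invFun p := (3 * p.1 - 5 * p.2, -p.1 + 2 * p.2)
  left_inv p := by
    obtain ⟨a, b⟩ := p
    simp only [Prod.mk.injEq]
    constructor <;> ring
  right_inv p := by
    obtain ⟨a, b⟩ := p
    simp only [Prod.mk.injEq]
    constructor <;> ring
  map_add' p q := by
    obtain ⟨a, b⟩ := p
    obtain ⟨c, d⟩ := q
    simp only [Prod.mk_add_mk, Prod.mk.injEq]
    constructor <;> ring

/-- The action of `ℤ` on `ℤ²` generated by `matAut`. -/
def matAction : Multiplicative ℤ →* MulAut (Multiplicative (ℤ × ℤ)) :=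
  zpowersHom _ (AddEquiv.toMultiplicative matAut)


open Multiplicative SemidirectProduct

abbrev GG := SemidirectProduct (Multiplicative (ℤ × ℤ)) (Multiplicative ℤ) matAction

lemma hom2_apply (φ : Multiplicative (ℤ × ℤ) →* Multiplicative ℤ) (a b : ℤ) :
    φ (ofAdd (a, b)) =
      ofAdd (a * (φ (ofAdd (1, 0))).toAdd + b * (φ (ofAdd (0, 1))).toAdd) := by
  have h1 : (ofAdd (a, b) : Multiplicative (ℤ × ℤ)) =
      (ofAdd ((1 : ℤ), (0 : ℤ))) ^ a * (ofAdd ((0 : ℤ), (1 : ℤ))) ^ b := by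
    rw [← ofAdd_zsmul, ← ofAdd_zsmul, ← ofAdd_add]
    congr 1
    simp [Prod.ext_iff]
  rw [h1, map_mul, map_zpow, map_zpow,
    ← ofAdd_toAdd (φ (ofAdd (1, 0))), ← ofAdd_toAdd (φ (ofAdd (0, 1))),
    ← ofAdd_zsmul, ← ofAdd_zsmul, ← ofAdd_add]
  simp [smul_eq_mul]

lemma matAction_one (w : ℤ × ℤ) :
    matAction (ofAdd (1 : ℤ)) (ofAdd w) = ofAdd (matAut w) := by
  simp [matAction]

lemma hom_GG_int_inl (φ : GG →* Multiplicative ℤ) (v : Multiplicative (ℤ × ℤ)) :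
    φ (inl v) = 1 := by
  set ψ := φ.comp (inl : Multiplicative (ℤ × ℤ) →* GG) with hψ
  have hrel : ∀ w : ℤ × ℤ, ψ (ofAdd (matAut w)) = ψ (ofAdd w) := by
    intro w
    have haut : (inl (matAction (ofAdd (1 : ℤ)) (ofAdd w)) : GG) =
        inr (ofAdd 1) * inl (ofAdd w) * inr (ofAdd 1)⁻¹ := inl_aut _ _
    rw [matAction_one] at haut
    have : ψ (ofAdd (matAut w)) =
        φ (inr (ofAdd 1)) * φ (inl (ofAdd w)) * (φ (inr (ofAdd 1)))⁻¹ := by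
      rw [hψ, MonoidHom.comp_apply, haut]
      simp [map_mul]
    rw [this, mul_comm (φ (inr (ofAdd 1))) (φ (inl (ofAdd w))), mul_assoc,
      mul_inv_cancel, mul_one]
    rfl
  set A := (ψ (ofAdd ((1 : ℤ), (0 : ℤ)))).toAdd with hA
  set B := (ψ (ofAdd ((0 : ℤ), (1 : ℤ)))).toAdd with hB
  have e1 : 2 * A + 1 * B = 1 * A + 0 * B := by
    have h := hrel (1, 0)
    have h10 : matAut ((1 : ℤ), (0 : ℤ)) = (2, 1) := by norm_num [matAut]
    rw [h10] at h
    exact ofAdd.injective (((hom2_apply ψ 2 1).symm.trans h).trans (hom2_apply ψ 1 0))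
  have e2 : 5 * A + 3 * B = 0 * A + 1 * B := by
    have h := hrel (0, 1)
    have h01 : matAut ((0 : ℤ), (1 : ℤ)) = (5, 3) := by norm_num [matAut]
    rw [h01] at h
    exact ofAdd.injective (((hom2_apply ψ 5 3).symm.trans h).trans (hom2_apply ψ 0 1))
  have hA0 : A = 0 := by omega
  have hB0 : B = 0 := by omega
  have : φ (inl v) = ψ (ofAdd v.toAdd) := rfl
  rw [this]
  obtain ⟨x, y⟩ := v.toAdd
  rw [hom2_apply]
  rw [hψ] at hA hB
  rw [← hA, ← hB, hA0, hB0]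
  simp

lemma hom_GG_int_apply (φ : GG →* Multiplicative ℤ) (g : GG) :
    φ g = ofAdd ((rightHom g).toAdd * (φ (inr (ofAdd 1))).toAdd) := by
  conv_lhs => rw [← inl_left_mul_inr_right g]
  rw [map_mul, hom_GG_int_inl, one_mul]
  have hg : g.right = (ofAdd (1 : ℤ)) ^ (g.right.toAdd) := by
    rw [← ofAdd_zsmul]; simp
  rw [hg, map_zpow, map_zpow]
  generalize φ (inr (ofAdd 1)) = c
  rw [← ofAdd_toAdd c, ← ofAdd_zsmul]
  simp [smul_eq_mul]

abbrev KK : Subgroup GG := (rightHom : GG →* Multiplicative ℤ).ker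

def fgUnitEquiv : FreeGroup Unit ≃* Multiplicative ℤ :=
  MonoidHom.toMulEquiv
    (FreeGroup.lift fun _ => ofAdd 1)
    (zpowersHom _ (FreeGroup.of ()))
    (by ext ⟨⟩; simp)
    (by ext; simp)

instance : IsFreeGroup (Multiplicative ℤ) := IsFreeGroup.ofMulEquiv fgUnitEquiv

lemma freeGroup_subsingleton {S : Type*} [IsEmpty S] : Subsingleton (FreeGroup S) := by
  have h : MonoidHom.id (FreeGroup S) = 1 :=
    FreeGroup.ext_hom _ _ fun s => isEmptyElim s
  refine ⟨fun a b => ?_⟩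
  have ha : a = 1 := DFunLike.congr_fun h a
  have hb : b = 1 := DFunLike.congr_fun h b
  rw [ha, hb]


lemma mem_KK_iff (g : GG) : g ∈ KK ↔ (rightHom g).toAdd = 0 := by
  rw [MonoidHom.mem_ker]
  constructor
  · intro h; rw [h]; rfl
  · intro h; exact toAdd.injective h

lemma top_step (N : Subgroup GG) {F : Type u} [Group F] (hF : IsFreeGroup F)
    (f : GG →* F) (hs : Function.Surjective f) (hk : f.ker = N) : N = ⊤ ∨ N = KK := by
  classical
  haveI := hF
  set S := IsFreeGroup.Generators F with hS
  let θ : F ≃* FreeGroup S := IsFreeGroup.toFreeGroup F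
  by_cases hsub : Subsingleton S
  · cases isEmpty_or_nonempty S with
    | inl he =>
      left
      haveI : Subsingleton (FreeGroup S) := freeGroup_subsingleton
      haveI : Subsingleton F := θ.toEquiv.subsingleton
      rw [← hk]
      ext g
      simp [MonoidHom.mem_ker, Subsingleton.elim (f g) 1]
    | inr hne =>
      right
      haveI : Unique S := uniqueOfSubsingleton (Classical.arbitrary S)
      let e2 : FreeGroup S ≃* FreeGroup Unit :=
        FreeGroup.freeGroupCongr (Equiv.ofUnique S Unit)
      let ψ : GG →* Multiplicative ℤ :=
        (fgUnitEquiv.toMonoidHom.comp (e2.toMonoidHom.comp θ.toMonoidHom)).comp f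
      have hψ : ∀ g, ψ g = fgUnitEquiv (e2 (θ (f g))) := fun g => rfl
      have hψs : Function.Surjective ψ := by
        intro z
        obtain ⟨g, hg⟩ := hs (θ.symm (e2.symm (fgUnitEquiv.symm z)))
        exact ⟨g, by simp [hψ, hg]⟩
      have hker : ψ.ker = N := by
        rw [← hk]
        ext g
        simp [MonoidHom.mem_ker, hψ]
      set c := (ψ (inr (ofAdd 1))).toAdd with hc
      have hcu : ∃ r : ℤ, r * c = 1 := by
        obtain ⟨g, hg⟩ := hψs (ofAdd 1)
        rw [hom_GG_int_apply] at hg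
        exact ⟨(rightHom g).toAdd, ofAdd.injective hg⟩
      have hc0 : c ≠ 0 := by
        rintro h
        obtain ⟨r, hr⟩ := hcu
        rw [h, mul_zero] at hr
        exact one_ne_zero hr.symm
      rw [← hker]
      ext g
      rw [MonoidHom.mem_ker, hom_GG_int_apply, mem_KK_iff]
      constructor
      · intro h
        have := ofAdd.injective (h.trans (ofAdd_zero).symm)
        rcases mul_eq_zero.mp this with h' | h'
        · exact h'
        · exact absurd h' hc0
      · intro h
        rw [← hc, h, zero_mul]
        rfl
  · exfalso
    have hxy : ∃ x y : S, x ≠ y := by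
      by_contra hcon
      push_neg at hcon
      exact hsub ⟨fun a b => hcon a b⟩
    obtain ⟨x, y, hxy⟩ := hxy
    let χ : S → GG →* Multiplicative ℤ := fun s0 =>
      ((FreeGroup.lift fun s => if s = s0 then ofAdd (1 : ℤ) else 1).comp
        θ.toMonoidHom).comp f
    obtain ⟨gx, hgx⟩ := hs (θ.symm (FreeGroup.of x))
    obtain ⟨gy, hgy⟩ := hs (θ.symm (FreeGroup.of y))
    have h1 : χ x gx = ofAdd 1 := by simp [χ, hgx]
    have h2 : χ x gy = 1 := by simp [χ, hgy, hxy.symm]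
    have h3 : χ y gx = 1 := by simp [χ, hgx, hxy]
    have h4 : χ y gy = ofAdd 1 := by simp [χ, hgy]
    rw [hom_GG_int_apply] at h1 h2 h3 h4
    set rx := (rightHom gx).toAdd
    set ry := (rightHom gy).toAdd
    set cx := ((χ x) (inr (ofAdd 1))).toAdd
    set cy := ((χ y) (inr (ofAdd 1))).toAdd
    have e1 : rx * cx = 1 := ofAdd.injective h1
    have e3 : rx * cy = 0 := ofAdd.injective (h3.trans ofAdd_zero.symm)
    have e4 : ry * cy = 1 := ofAdd.injective h4
    have hrx : rx ≠ 0 := fun h => by simp [h] at e1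
    have hcy : cy = 0 := by
      rcases mul_eq_zero.mp e3 with h | h
      · exact absurd h hrx
      · exact h
    rw [hcy, mul_zero] at e4
    exact one_ne_zero e4.symm

noncomputable def eK : Multiplicative (ℤ × ℤ) ≃* ↥KK :=
  (MonoidHom.ofInjective (inl_injective (φ := matAction))).trans
    (MulEquiv.subgroupCongr range_inl_eq_ker_rightHom)

lemma eK_coe (x : Multiplicative (ℤ × ℤ)) : ((eK x : ↥KK) : GG) = inl x := rfl

lemma freeGroup_of_not_commute {S : Type*} {x y : S} (h : x ≠ y) :
    FreeGroup.of x * FreeGroup.of y ≠ FreeGroup.of y * FreeGroup.of x := by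
  classical
  intro hc
  have h2 := congrArg (FreeGroup.lift (fun s : S =>
    if s = x then Equiv.swap (0 : Fin 3) 1 else if s = y then Equiv.swap (1 : Fin 3) 2 else 1)) hc
  simp [h, h.symm] at h2
  have h3 := congrArg (fun e : Equiv.Perm (Fin 3) => e 0) h2
  simp [Equiv.swap_apply_def] at h3

lemma nat_descent : ∀ y : ℕ, ∀ x : ℕ, x * x = 21 * (y * y) → y = 0 := by
  intro y
  induction y using Nat.strong_induction_on with
  | _ y ih =>
    intro x hx
    rcases Nat.eq_zero_or_pos y with h0 | hpos
    · exact h0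
    have h3 : (3 : ℕ).Prime := by norm_num
    have hdvd : 3 ∣ x := by
      refine h3.dvd_of_dvd_pow (n := 2) ?_
      rw [pow_two, hx]; exact ⟨7 * (y * y), by ring⟩
    obtain ⟨z, rfl⟩ := hdvd
    have hx' : 3 * (z * z) = 7 * (y * y) := by nlinarith
    have hdvd2 : 3 ∣ y := by
      refine h3.dvd_of_dvd_pow (n := 2) ?_
      have hd : 3 ∣ 7 * (y * y) := ⟨z * z, hx'.symm⟩
      rcases (Nat.Coprime.dvd_of_dvd_mul_left (by norm_num) hd) with ⟨w, hw⟩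
      rw [pow_two, hw]; exact ⟨w, rfl⟩
    obtain ⟨w, rfl⟩ := hdvd2
    have hw' : z * z = 21 * (w * w) := by nlinarith
    have : w = 0 := ih w (by nlinarith) z hw'
    simp [this]

lemma int_quad {p q : ℤ} (h : q * q - p * q - 5 * (p * p) = 0) : p = 0 ∧ q = 0 := by
  have h21 : (2 * q - p) * (2 * q - p) = 21 * (p * p) := by ring_nf; linarith [h]
  have hp : p = 0 := by
    have hd := nat_descent p.natAbs (2 * q - p).natAbs (by
      have := congrArg Int.natAbs h21
      rw [Int.natAbs_mul, Int.natAbs_mul] at this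
      simpa [Int.natAbs_mul] using this)
    exact Int.natAbs_eq_zero.mp hd
  constructor
  · exact hp
  · subst hp; nlinarith

lemma bottom_step (N : Subgroup GG) (hN : N.Normal) (hle : N ≤ KK) {F : Type u} [Group F]
    (hF : IsFreeGroup F) (f : ↥KK →* F) (hs : Function.Surjective f)
    (hk : f.ker = N.subgroupOf KK) : N = KK := by
  classical
  haveI := hF
  have hcomm : ∀ a b : F, a * b = b * a := by
    intro a b
    obtain ⟨u, rfl⟩ := hs a
    obtain ⟨v, rfl⟩ := hs b
    obtain ⟨u', rfl⟩ := eK.surjective u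
    obtain ⟨v', rfl⟩ := eK.surjective v
    calc f (eK u') * f (eK v') = f (eK (u' * v')) := by rw [map_mul, map_mul]
      _ = f (eK (v' * u')) := by rw [mul_comm]
      _ = f (eK v') * f (eK u') := by rw [map_mul, map_mul]
  set S := IsFreeGroup.Generators F with hS
  let θ : F ≃* FreeGroup S := IsFreeGroup.toFreeGroup F
  have hsub : Subsingleton S := by
    by_contra hcon
    have hxy : ∃ x y : S, x ≠ y := by
      by_contra hcon2
      push_neg at hcon2
      exact hcon ⟨fun a b => hcon2 a b⟩
    obtain ⟨x, y, hxy⟩ := hxy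
    refine freeGroup_of_not_commute hxy ?_
    have h := hcomm (θ.symm (FreeGroup.of x)) (θ.symm (FreeGroup.of y))
    have := congrArg θ h
    simpa [map_mul] using this
  cases isEmpty_or_nonempty S with
  | inl he =>
    haveI : Subsingleton (FreeGroup S) := freeGroup_subsingleton
    haveI : Subsingleton F := θ.toEquiv.subsingleton
    have hktop : f.ker = ⊤ := by
      ext g; simp [MonoidHom.mem_ker, Subsingleton.elim (f g) 1]
    rw [hktop] at hk
    exact le_antisymm hle (Subgroup.subgroupOf_eq_top.mp hk.symm)
  | inr hne =>
    haveI : Unique S := uniqueOfSubsingleton (Classical.arbitrary S)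
    let e2 : FreeGroup S ≃* FreeGroup Unit :=
      FreeGroup.freeGroupCongr (Equiv.ofUnique S Unit)
    let ψ : ↥KK →* Multiplicative ℤ :=
      (fgUnitEquiv.toMonoidHom.comp (e2.toMonoidHom.comp θ.toMonoidHom)).comp f
    have hψ : ∀ g, ψ g = fgUnitEquiv (e2 (θ (f g))) := fun g => rfl
    have hψs : Function.Surjective ψ := by
      intro z
      obtain ⟨g, hg⟩ := hs (θ.symm (e2.symm (fgUnitEquiv.symm z)))
      exact ⟨g, by simp [hψ, hg]⟩
    have hψker : ∀ w : ↥KK, ψ w = 1 ↔ (w : GG) ∈ N := by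
      intro w
      have : ψ w = 1 ↔ w ∈ f.ker := by
        rw [MonoidHom.mem_ker]
        simp [hψ]
      rw [this, hk, Subgroup.mem_subgroupOf]
    let φ : Multiplicative (ℤ × ℤ) →* Multiplicative ℤ := ψ.comp eK.toMonoidHom
    have hφs : Function.Surjective φ := hψs.comp eK.surjective
    have hφker : ∀ v : ℤ × ℤ, φ (ofAdd v) = 1 ↔ (inl (ofAdd v) : GG) ∈ N := by
      intro v
      have : φ (ofAdd v) = ψ (eK (ofAdd v)) := rfl
      rw [this, hψker, eK_coe]
    set p := (φ (ofAdd ((1 : ℤ), (0 : ℤ)))).toAdd with hp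
    set q := (φ (ofAdd ((0 : ℤ), (1 : ℤ)))).toAdd with hq
    have hqp : φ (ofAdd ((q, -p) : ℤ × ℤ)) = 1 := by
      rw [hom2_apply φ q (-p), ← hp, ← hq]
      rw [show q * p + -p * q = 0 by ring]
      rfl
    have hinv : (inl (ofAdd ((matAut (q, -p)) : ℤ × ℤ)) : GG) ∈ N := by
      have hmem := (hφker _).mp hqp
      have haut : (inl (matAction (ofAdd (1 : ℤ)) (ofAdd ((q, -p) : ℤ × ℤ))) : GG) =
          inr (ofAdd 1) * inl (ofAdd ((q, -p) : ℤ × ℤ)) * inr (ofAdd 1)⁻¹ := inl_aut _ _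
      rw [matAction_one] at haut
      rw [haut]
      exact hN.conj_mem _ hmem (inr (ofAdd 1))
    have h2 := (hφker _).mpr hinv
    have hmat : (matAut ((q, -p) : ℤ × ℤ)) = (2 * q - 5 * p, q - 3 * p) := by
      simp [matAut]; constructor <;> ring
    rw [hmat, hom2_apply φ (2 * q - 5 * p) (q - 3 * p), ← hp, ← hq] at h2
    have h3 : (2 * q - 5 * p) * p + (q - 3 * p) * q = 0 :=
      ofAdd.injective (h2.trans ofAdd_zero.symm)
    obtain ⟨hp0, hq0⟩ := int_quad (p := p) (q := q) (by linarith [h3])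
    obtain ⟨w, hw⟩ := hφs (ofAdd 1)
    exact absurd hw (by
      rw [show w = ofAdd w.toAdd from rfl]
      obtain ⟨a, b⟩ := w.toAdd
      rw [hom2_apply φ a b, ← hp, ← hq, hp0, hq0]
      intro hcon
      have := ofAdd.injective hcon
      simp at this)

lemma part2 : ¬ IsNormallyPolyFree GG := by
  rintro ⟨n, c, h0, hlast, hmono, hnorm, hstep⟩
  have step : ∀ i : Fin n, (c i.succ = ⊤ ∨ c i.succ = KK) →
      (c i.castSucc = ⊤ ∨ c i.castSucc = KK) := by
    intro i hi
    obtain ⟨F, hFg, f, hF, hs, hk⟩ := hstep i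
    rcases hi with hT | hK
    · let e : GG ≃* ↥(c i.succ) :=
        Subgroup.topEquiv.symm.trans (MulEquiv.subgroupCongr hT).symm
      have hcoe : ∀ g : GG, ((e g : ↥(c i.succ)) : GG) = g := fun g => rfl
      refine top_step _ hF (f.comp e.toMonoidHom) (hs.comp e.surjective) ?_
      ext g
      simp only [MonoidHom.mem_ker, MonoidHom.comp_apply]
      rw [← MonoidHom.mem_ker, hk, Subgroup.mem_subgroupOf]
      exact Iff.rfl
    · right
      let e : ↥KK ≃* ↥(c i.succ) := (MulEquiv.subgroupCongr hK).symm
      have hcoe : ∀ w : ↥KK, ((e w : ↥(c i.succ)) : GG) = (w : GG) := fun w => rfl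
      refine bottom_step _ (hnorm _) (hK ▸ hmono i) hF (f.comp e.toMonoidHom)
        (hs.comp e.surjective) ?_
      ext w
      simp only [MonoidHom.mem_ker, MonoidHom.comp_apply]
      rw [← MonoidHom.mem_ker, hk, Subgroup.mem_subgroupOf, Subgroup.mem_subgroupOf]
      exact Iff.rfl
  have hdesc : ∀ m : ℕ, (hm : m ≤ n) →
      (c ⟨n - m, by omega⟩ = ⊤ ∨ c ⟨n - m, by omega⟩ = KK) := by
    intro m
    induction m with
    | zero =>
      intro _
      left
      have heq : (⟨n - 0, by omega⟩ : Fin (n + 1)) = Fin.last n := by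
        ext; simp
      rw [heq]
      exact hlast
    | succ m ih =>
      intro hm
      have hm' : m ≤ n := by omega
      have hi : n - (m + 1) < n := by omega
      have hsucc : (⟨n - (m + 1), hi⟩ : Fin n).succ = (⟨n - m, by omega⟩ : Fin (n + 1)) := by
        ext
        simp [Fin.succ]
        omega
      have := step ⟨n - (m + 1), hi⟩ (by rw [hsucc]; exact ih hm')
      exact this
  have hbot := hdesc n le_rfl
  have h00 : (⟨n - n, by omega⟩ : Fin (n + 1)) = 0 := by ext; simp
  rw [h00, h0] at hbot
  rcases hbot with hb | hb
  · have hmem : (inr (ofAdd (1 : ℤ)) : GG) ∈ (⊥ : Subgroup GG) := by rw [hb]; trivial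
    rw [Subgroup.mem_bot] at hmem
    have : (ofAdd (1 : ℤ)) = 1 := inr_injective (by rw [hmem]; exact (map_one inr).symm)
    have h10 : (1 : ℤ) = 0 := ofAdd.injective this
    norm_num at h10
  · have hmem : (inl (ofAdd ((1 : ℤ), (0 : ℤ))) : GG) ∈ KK := by
      rw [MonoidHom.mem_ker]; simp
    rw [← hb, Subgroup.mem_bot] at hmem
    have : (ofAdd ((1 : ℤ), (0 : ℤ))) = 1 := inl_injective (by rw [hmem]; exact (map_one inl).symm)
    have h10 : ((1 : ℤ), (0 : ℤ)) = (0, 0) := ofAdd.injective this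
    simp at h10


-- projection and inclusion for ℤ × ℤ
def projSnd : Multiplicative (ℤ × ℤ) →* Multiplicative ℤ :=
  AddMonoidHom.toMultiplicative (AddMonoidHom.snd ℤ ℤ)

def inclFst : Multiplicative ℤ →* Multiplicative (ℤ × ℤ) :=
  AddMonoidHom.toMultiplicative (AddMonoidHom.inl ℤ ℤ)

lemma projSnd_surj : Function.Surjective projSnd := fun a => ⟨ofAdd (0, a.toAdd), rfl⟩

lemma inclFst_inj : Function.Injective inclFst := by
  intro a b h
  simpa [inclFst, Prod.ext_iff] using h

lemma range_inclFst : inclFst.range = projSnd.ker := by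
  ext x
  constructor
  · rintro ⟨a, rfl⟩; rfl
  · intro hx
    refine ⟨ofAdd x.toAdd.1, ?_⟩
    have h2 : x.toAdd.2 = 0 := congrArg Multiplicative.toAdd hx
    apply Multiplicative.toAdd.injective
    simp [inclFst, Prod.ext_iff, h2]

lemma isPolyFreeOfLen_one (G : Type u) [Group G] [IsFreeGroup G] : IsPolyFreeOfLen 1 G := by
  refine ⟨⊥, inferInstance, ?_, ?_⟩
  · exact inferInstanceAs (Subsingleton (⊥ : Subgroup G))
  · exact IsFreeGroup.ofMulEquiv (QuotientGroup.quotientBot (G := G)).symm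

lemma isPolyFreeOfLen_congr : ∀ (n : ℕ) {G : Type u} {H : Type u} [Group G] [Group H]
    (e : G ≃* H), IsPolyFreeOfLen n G → IsPolyFreeOfLen n H
  | 0, G, H, _, _, e, h => by
    exact ⟨fun a b => by
      have : Subsingleton G := h
      rw [← e.apply_symm_apply a, ← e.apply_symm_apply b, Subsingleton.elim (e.symm a) (e.symm b)]⟩
  | n + 1, G, H, _, _, e, h => by
    obtain ⟨N, hN, h1, h2⟩ := h
    haveI := hN
    haveI hN' : (N.map e.toMonoidHom).Normal := hN.map e.toMonoidHom e.surjective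
    refine ⟨N.map e.toMonoidHom, hN', ?_, ?_⟩
    · exact isPolyFreeOfLen_congr n (e.subgroupMap N) h1
    · haveI := h2
      exact IsFreeGroup.ofMulEquiv (QuotientGroup.congr N (N.map e.toMonoidHom) e rfl)

lemma isPolyFreeOfLen_two : IsPolyFreeOfLen 2 (Multiplicative (ℤ × ℤ)) := by
  refine ⟨projSnd.ker, inferInstance, ?_, ?_⟩
  · refine isPolyFreeOfLen_congr 1
      (((MonoidHom.ofInjective inclFst_inj)).trans (MulEquiv.subgroupCongr range_inclFst))
      (isPolyFreeOfLen_one _)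
  · exact IsFreeGroup.ofMulEquiv (QuotientGroup.quotientKerEquivOfSurjective projSnd projSnd_surj).symm

lemma part1 : IsPolyFree GG := by
  refine ⟨3, KK, inferInstance, ?_, ?_⟩
  · exact isPolyFreeOfLen_congr 2 eK isPolyFreeOfLen_two
  · exact IsFreeGroup.ofMulEquiv
      (QuotientGroup.quotientKerEquivOfSurjective _ rightHom_surjective).symm


/-- The group `G = ℤ² ⋊_f ℤ`, where `f` is the automorphism of `ℤ²` given by the
matrix `[[2,5],[1,3]]`, is poly-free but not normally poly-free. -/
theorem semidirect_matrix_polyFree_not_normallyPolyFree :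
    IsPolyFree (SemidirectProduct (Multiplicative (ℤ × ℤ)) (Multiplicative ℤ) matAction) ∧
    ¬ IsNormallyPolyFree
        (SemidirectProduct (Multiplicative (ℤ × ℤ)) (Multiplicative ℤ) matAction) := by
  exact ⟨part1, part2⟩
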